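/- arXiv:1304.1588 — 2 statements merged into one kernel-verified Lean document; each statement's English description precedes it below -/
import Mathlib

section
/- Assume κ_1 μ_1 + κ_2 μ_2 = κ_3 conj(μ_3) with κ_1, κ_2, κ_3 > 0 and Im λ_j < 0 for j = 1,2,3. Then there exist positive constants C* and C_* such that −C* ν_A(z)³ ≤ Im⟨F(z), Az⟩_{ℂ³} ≤ −C_* ν_A(z)³ for all z ∈ ℂ³. -/
open MeasureTheory Filter Complex

noncomputable section

/-- The underlying space `ℝ²`. -/
abbrev V2 : Type := EuclideanSpace ℝ (Fin 2)

/-- Fourier transform on `ℝ²` with the normalization `f̂(ξ) = (2π)⁻¹ ∫ e^{-iy·ξ} f(y) dy`. -/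
def FT (f : V2 → ℂ) (ξ : V2) : ℂ :=
  (2 * Real.pi : ℂ)⁻¹ * ∫ y : V2, Complex.exp (-Complex.I * ((inner ℝ y ξ : ℝ) : ℂ)) * f y

/-- Inverse Fourier transform on `ℝ²`. -/
def FTinv (f : V2 → ℂ) (x : V2) : ℂ :=
  (2 * Real.pi : ℂ)⁻¹ * ∫ ξ : V2, Complex.exp (Complex.I * ((inner ℝ x ξ : ℝ) : ℂ)) * f ξ

/-- The `L²(ℝ²)` norm. -/
def L2N (f : V2 → ℂ) : ℝ := (eLpNorm f 2 volume).toReal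

/-- The `L³(ℝ²)` norm. -/
def L3N (f : V2 → ℂ) : ℝ := (eLpNorm f 3 volume).toReal

/-- The `L^∞(ℝ²)` norm of a `ℂ³`-valued function. -/
def LinfN (f : V2 → Fin 3 → ℂ) : ℝ := (eLpNorm f ⊤ volume).toReal

/-- The function `ξ ↦ (1+|ξ|²)^{s/2} f̂(ξ)`, i.e. the Fourier side of `(1-Δ)^{s/2} f`. -/
def sobFn (s : ℝ) (f : V2 → ℂ) : V2 → ℂ :=
  fun ξ => (((1 + ‖ξ‖ ^ 2) ^ (s / 2) : ℝ) : ℂ) * FT f ξ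

/-- The function `x ↦ (1+|x|²)^{s/2} f(x)`. -/
def wFn (s : ℝ) (f : V2 → ℂ) : V2 → ℂ :=
  fun x => (((1 + ‖x‖ ^ 2) ^ (s / 2) : ℝ) : ℂ) * f x

/-- The `H^{s,0}(ℝ²)` norm (via the Fourier transform). -/
def sobNorm (s : ℝ) (f : V2 → ℂ) : ℝ := L2N (sobFn s f)

/-- The `H^{0,s}(ℝ²)` norm. -/
def wNorm (s : ℝ) (f : V2 → ℂ) : ℝ := L2N (wFn s f)

/-- Membership in `H^{s,0}(ℝ²)`. -/
def MemSob (s : ℝ) (f : V2 → ℂ) : Prop := MemLp (sobFn s f) 2 volume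

/-- Membership in `H^{0,s}(ℝ²)`. -/
def MemW (s : ℝ) (f : V2 → ℂ) : Prop := MemLp (wFn s f) 2 volume

/-- Componentwise `H^{s,0}` norm of a `ℂ³`-valued function. -/
def sobNormS (s : ℝ) (f : V2 → Fin 3 → ℂ) : ℝ := ∑ j, sobNorm s (fun x => f x j)

/-- Componentwise `H^{0,s}` norm of a `ℂ³`-valued function. -/
def wNormS (s : ℝ) (f : V2 → Fin 3 → ℂ) : ℝ := ∑ j, wNorm s (fun x => f x j)

/-- Componentwise membership in `H^{s,0}`. -/
def MemSobS (s : ℝ) (f : V2 → Fin 3 → ℂ) : Prop := ∀ j, MemSob s (fun x => f x j)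

/-- Componentwise membership in `H^{0,s}`. -/
def MemWS (s : ℝ) (f : V2 → Fin 3 → ℂ) : Prop := ∀ j, MemW s (fun x => f x j)

/-- The norm `‖f‖_{H^{s,0}} + ‖f‖_{H^{0,s}}`. -/
def HN (s : ℝ) (f : V2 → Fin 3 → ℂ) : ℝ := sobNormS s f + wNormS s f

/-- The quadratic nonlinearity `F : ℂ³ → ℂ³` of the system. -/
def Fnl (l μ : Fin 3 → ℂ) (z : Fin 3 → ℂ) : Fin 3 → ℂ :=
  ![l 0 * ((‖z 0‖ : ℝ) : ℂ) * z 0 + μ 0 * (starRingEnd ℂ) (z 1) * z 2,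
    l 1 * ((‖z 1‖ : ℝ) : ℂ) * z 1 + μ 1 * (starRingEnd ℂ) (z 0) * z 2,
    l 2 * ((‖z 2‖ : ℝ) : ℂ) * z 2 + μ 2 * z 0 * z 1]

/-- The standard Hermitian inner product `⟨z,w⟩ = Σ z_j conj(w_j)` on `ℂ³`. -/
def innC3 (z w : Fin 3 → ℂ) : ℂ := ∑ j, z j * (starRingEnd ℂ) (w j)

/-- Multiplication by the diagonal matrix `A = diag(κ₁,κ₂,κ₃)`. -/
def Amul (κ : Fin 3 → ℝ) (z : Fin 3 → ℂ) : Fin 3 → ℂ := fun j => (κ j : ℂ) * z j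

/-- `ν_A(z) = sqrt(κ₁|z₁|² + κ₂|z₂|² + κ₃|z₃|²)`. -/
def nuA (κ : Fin 3 → ℝ) (z : Fin 3 → ℂ) : ℝ :=
  Real.sqrt (∑ j, κ j * ‖z j‖ ^ 2)

/-- The free propagator `exp(i t Δ/(2m))` (as a Fourier multiplier). -/
def prop1 (mass t : ℝ) (f : V2 → ℂ) : V2 → ℂ :=
  FTinv fun ξ =>
    Complex.exp (-Complex.I * (t : ℂ) * ((‖ξ‖ ^ 2 : ℝ) : ℂ) / (2 * (mass : ℂ))) * FT f ξ

/-- The free propagator `U(t) = (exp(itΔ/(2m_j)))_{j=1,2,3}` for the system. -/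
def Uprop (m : Fin 3 → ℝ) (t : ℝ) (f : V2 → Fin 3 → ℂ) : V2 → Fin 3 → ℂ :=
  fun x j => prop1 (m j) t (fun y => f y j) x

/-- The operator `(Gφ)(ξ) = (−i m_j φ̂_j(m_j ξ))_{j=1,2,3}`. -/
def Gop (m : Fin 3 → ℝ) (f : V2 → Fin 3 → ℂ) : V2 → Fin 3 → ℂ :=
  fun ξ j => -Complex.I * ((m j : ℝ) : ℂ) * FT (fun y => f y j) ((m j) • ξ)

/-- The Laplacian on `ℝ²`. -/
def lap (f : V2 → ℂ) (x : V2) : ℂ :=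
  ∑ i : Fin 2,
    iteratedFDeriv ℝ 2 f x ![EuclideanSpace.single i (1 : ℝ), EuclideanSpace.single i 1]

/-- `u` satisfies the system `i ∂_t u_j + (1/(2m_j)) Δ u_j = F_j(u)` at time `t`. -/
def SolEq (m : Fin 3 → ℝ) (l μ : Fin 3 → ℂ) (u : ℝ → V2 → Fin 3 → ℂ) (t : ℝ) : Prop :=
  ∀ x : V2, ∀ j : Fin 3,
    Complex.I * deriv (fun τ => u τ x j) t
        + (1 / (2 * ((m j : ℝ) : ℂ))) * lap (fun y => u t y j) x
      = Fnl l μ (u t x) j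

/-- `u` is a solution of the initial value problem on `[0,T]`, belonging to
`C([0,T]; H^{s,0} ∩ H^{0,s})`. -/
def IsSolOn (m : Fin 3 → ℝ) (l μ : Fin 3 → ℂ) (s : ℝ) (φ : V2 → Fin 3 → ℂ)
    (T : ℝ) (u : ℝ → V2 → Fin 3 → ℂ) : Prop :=
  (∀ x, u 0 x = φ x) ∧
  (∀ t ∈ Set.Icc (0 : ℝ) T, MemSobS s (u t) ∧ MemWS s (u t)) ∧
  (∀ t₀ ∈ Set.Icc (0 : ℝ) T,
    Filter.Tendsto (fun t => HN s fun x j => u t x j - u t₀ x j)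
      (nhdsWithin t₀ (Set.Icc 0 T)) (nhds 0)) ∧
  (∀ t ∈ Set.Ioo (0 : ℝ) T, SolEq m l μ u t)

/-- `u` is a global solution of the initial value problem, belonging to
`C([0,∞); H^{s,0} ∩ H^{0,s})`. -/
def IsGlobalSol (m : Fin 3 → ℝ) (l μ : Fin 3 → ℂ) (s : ℝ) (φ : V2 → Fin 3 → ℂ)
    (u : ℝ → V2 → Fin 3 → ℂ) : Prop :=
  (∀ x, u 0 x = φ x) ∧
  (∀ t ∈ Set.Ici (0 : ℝ), MemSobS s (u t) ∧ MemWS s (u t)) ∧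
  (∀ t₀ ∈ Set.Ici (0 : ℝ),
    Filter.Tendsto (fun t => HN s fun x j => u t x j - u t₀ x j)
      (nhdsWithin t₀ (Set.Ici 0)) (nhds 0)) ∧
  (∀ t ∈ Set.Ioi (0 : ℝ), SolEq m l μ u t)

/-- The norm `‖u‖_{X_T}`. -/
def XTnorm (m : Fin 3 → ℝ) (s γ T : ℝ) (u : ℝ → V2 → Fin 3 → ℂ) : ℝ :=
  ⨆ t : Set.Icc (0 : ℝ) T,
    ((1 + (t : ℝ)) * LinfN (u (t : ℝ)) +
      (1 + (t : ℝ)) ^ (-(γ / 3)) *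
        (sobNormS s (u (t : ℝ)) + wNormS s (Uprop m (-(t : ℝ)) (u (t : ℝ)))))

/-- `E_θ z = (e^{i m_j θ} z_j)_{j=1,2,3}`. -/
def Eop (m : Fin 3 → ℝ) (θ : ℝ) (z : Fin 3 → ℂ) : Fin 3 → ℂ :=
  fun j => Complex.exp (Complex.I * ((m j * θ : ℝ) : ℂ)) * z j

/-- `M(t)φ = (e^{i m_j |x|²/(2t)} φ_j)_{j=1,2,3}`. -/
def Mop (m : Fin 3 → ℝ) (t : ℝ) (f : V2 → Fin 3 → ℂ) : V2 → Fin 3 → ℂ :=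
  fun x j => Complex.exp (Complex.I * ((m j * ‖x‖ ^ 2 / (2 * t) : ℝ) : ℂ)) * f x j

/-- `(D(t)φ)(x) = t⁻¹ φ(x/t)`. -/
def Dop (t : ℝ) (f : V2 → Fin 3 → ℂ) : V2 → Fin 3 → ℂ :=
  fun x j => ((t : ℝ) : ℂ)⁻¹ * f (t⁻¹ • x) j

/-- The inverse `G⁻¹` of the operator `G`. -/
def Ginv (m : Fin 3 → ℝ) (f : V2 → Fin 3 → ℂ) : V2 → Fin 3 → ℂ :=
  fun x j => FTinv (fun η => (Complex.I / ((m j : ℝ) : ℂ)) * f ((m j)⁻¹ • η) j) x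

/-- `W(t) = G M(t) G⁻¹`. -/
def Wop (m : Fin 3 → ℝ) (t : ℝ) (f : V2 → Fin 3 → ℂ) : V2 → Fin 3 → ℂ :=
  Gop m (Mop m t (Ginv m f))

end
/-- the two-sided bound `−C* ν_A(z)³ ≤ Im⟨F(z),Az⟩ ≤ −C_* ν_A(z)³`. -/
theorem strict_dissipativity_bounds
    (l μ : Fin 3 → ℂ) (κ : Fin 3 → ℝ)
    (hl : ∀ j, l j ≠ 0) (hmu : ∀ j, μ j ≠ 0)
    (hdiss : ∀ j, (l j).im < 0)
    (hκ : ∀ j, 0 < κ j)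
    (hcoef : (κ 0 : ℂ) * μ 0 + (κ 1 : ℂ) * μ 1 = (κ 2 : ℂ) * (starRingEnd ℂ) (μ 2)) :
    ∃ Cstar : ℝ, 0 < Cstar ∧ ∃ Clow : ℝ, 0 < Clow ∧
      ∀ z : Fin 3 → ℂ,
        -Cstar * nuA κ z ^ 3 ≤ (innC3 (Fnl l μ z) (Amul κ z)).im ∧
        (innC3 (Fnl l μ z) (Amul κ z)).im ≤ -Clow * nuA κ z ^ 3 := by
  -- coefficients c j = κ j * (-(l j).im) / (√κ j)^3
  set c : Fin 3 → ℝ := fun j => κ j * (-(l j).im) / (Real.sqrt (κ j)) ^ 3 with hc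
  have hsq : ∀ j, 0 < Real.sqrt (κ j) := fun j => Real.sqrt_pos.mpr (hκ j)
  have hcpos : ∀ j, 0 < c j := by
    intro j
    exact div_pos (mul_pos (hκ j) (by linarith [hdiss j])) (pow_pos (hsq j) 3)
  set cmax : ℝ := max (c 0) (max (c 1) (c 2)) with hcmax
  set cmin : ℝ := min (c 0) (min (c 1) (c 2)) with hcmin
  have hcmaxpos : 0 < cmax := lt_of_lt_of_le (hcpos 0) (le_max_left _ _)
  have hcminpos : 0 < cmin := lt_min (hcpos 0) (lt_min (hcpos 1) (hcpos 2))
  have hcmin_le : ∀ j, cmin ≤ c j := by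
    intro j
    fin_cases j
    · exact min_le_left _ _
    · exact le_trans (min_le_right _ _) (min_le_left _ _)
    · exact le_trans (min_le_right _ _) (min_le_right _ _)
  have hcmax_ge : ∀ j, c j ≤ cmax := by
    intro j
    fin_cases j
    · exact le_max_left _ _
    · exact le_trans (le_max_left _ _) (le_max_right _ _)
    · exact le_trans (le_max_right _ _) (le_max_right _ _)
  refine ⟨cmax, hcmaxpos, cmin / (3 * Real.sqrt 3), by positivity, fun z => ?_⟩
  -- key identity for the imaginary part
  have key : (innC3 (Fnl l μ z) (Amul κ z)).im
      = ∑ j, κ j * (l j).im * ‖z j‖ ^ 3 := by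
    have h0 : z 0 * (starRingEnd ℂ) (z 0) = ((‖z 0‖ : ℝ) : ℂ) ^ 2 := by
      rw [Complex.mul_conj, ← Complex.sq_norm]; push_cast; ring
    have h1 : z 1 * (starRingEnd ℂ) (z 1) = ((‖z 1‖ : ℝ) : ℂ) ^ 2 := by
      rw [Complex.mul_conj, ← Complex.sq_norm]; push_cast; ring
    have h2 : z 2 * (starRingEnd ℂ) (z 2) = ((‖z 2‖ : ℝ) : ℂ) ^ 2 := by
      rw [Complex.mul_conj, ← Complex.sq_norm]; push_cast; ring
    have hC : innC3 (Fnl l μ z) (Amul κ z)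
        = ((κ 0 * ‖z 0‖ ^ 3 : ℝ) : ℂ) * l 0 +
          ((κ 1 * ‖z 1‖ ^ 3 : ℝ) : ℂ) * l 1 +
          ((κ 2 * ‖z 2‖ ^ 3 : ℝ) : ℂ) * l 2 +
          ((κ 2 : ℂ) * μ 2 * z 0 * z 1 * (starRingEnd ℂ) (z 2) +
            (starRingEnd ℂ) ((κ 2 : ℂ) * μ 2 * z 0 * z 1 * (starRingEnd ℂ) (z 2))) := by
      simp only [innC3, Fnl, Amul, Fin.sum_univ_three, Matrix.cons_val_zero,
        Matrix.cons_val_one, Matrix.head_cons, Matrix.cons_val_two, Matrix.tail_cons,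
        map_mul, map_add, Complex.conj_ofReal, Complex.conj_conj]
      push_cast
      linear_combination ((κ 0 : ℂ) * l 0 * (‖z 0‖ : ℂ)) * h0 +
        ((κ 1 : ℂ) * l 1 * (‖z 1‖ : ℂ)) * h1 +
        ((κ 2 : ℂ) * l 2 * (‖z 2‖ : ℂ)) * h2 +
        ((starRingEnd ℂ) (z 0) * (starRingEnd ℂ) (z 1) * z 2) * hcoef
    rw [hC]
    simp only [Fin.sum_univ_three, Complex.add_im, Complex.mul_im, Complex.ofReal_re, Complex.ofReal_im, Complex.conj_im]
    ring
  -- abbreviations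
  set t : Fin 3 → ℝ := fun j => ‖z j‖ with ht
  have htnn : ∀ j, 0 ≤ t j := fun j => norm_nonneg _
  set x : Fin 3 → ℝ := fun j => Real.sqrt (κ j) * t j with hx
  have hxnn : ∀ j, 0 ≤ x j := fun j => mul_nonneg (hsq j).le (htnn j)
  set S : ℝ := ∑ j, κ j * t j ^ 2 with hS
  have hSx : S = ∑ j, x j ^ 2 := by
    apply Finset.sum_congr rfl
    intro j _
    simp only [hx]
    rw [mul_pow, Real.sq_sqrt (hκ j).le]
  have hSnn : 0 ≤ S := Finset.sum_nonneg fun j _ =>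
    mul_nonneg (hκ j).le (sq_nonneg _)
  have hnu : nuA κ z = Real.sqrt S := rfl
  set N : ℝ := Real.sqrt S with hN
  have hNnn : 0 ≤ N := Real.sqrt_nonneg _
  have hN2 : N ^ 2 = S := Real.sq_sqrt hSnn
  -- the imaginary part equals -∑ c j * x j ^ 3
  have keyx : (innC3 (Fnl l μ z) (Amul κ z)).im = -∑ j, c j * x j ^ 3 := by
    rw [key, ← Finset.sum_neg_distrib]
    apply Finset.sum_congr rfl
    intro j _
    simp only [hc, hx]
    have : Real.sqrt (κ j) ^ 3 ≠ 0 := (pow_pos (hsq j) 3).ne'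
    field_simp
    rw [mul_div_right_comm _ (t j ^ 3), mul_div_assoc (κ j * (l j).im), div_self (hsq j).ne', mul_one]
  set X : ℝ := ∑ j, x j ^ 3 with hX
  have hXnn : 0 ≤ X := Finset.sum_nonneg fun j _ => pow_nonneg (hxnn j) 3
  -- x j ≤ N
  have hxleN : ∀ j, x j ≤ N := by
    intro j
    have : x j ^ 2 ≤ S := by
      rw [hSx]
      exact Finset.single_le_sum (fun i _ => sq_nonneg (x i)) (Finset.mem_univ j)
    calc x j = Real.sqrt (x j ^ 2) := (Real.sqrt_sq (hxnn j)).symm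
      _ ≤ Real.sqrt S := Real.sqrt_le_sqrt this
  -- (1) X ≤ N^3
  have hXleN3 : X ≤ N ^ 3 := by
    have : X ≤ ∑ j, x j ^ 2 * N := by
      apply Finset.sum_le_sum
      intro j _
      have := mul_le_mul_of_nonneg_left (hxleN j) (sq_nonneg (x j))
      calc x j ^ 3 = x j ^ 2 * x j := by ring
        _ ≤ x j ^ 2 * N := this
    calc X ≤ ∑ j, x j ^ 2 * N := this
      _ = S * N := by rw [hSx, ← Finset.sum_mul]
      _ = N ^ 3 := by rw [← hN2]; ring
  -- (2) N^3 ≤ 3 √3 X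
  have hN3leX : N ^ 3 ≤ 3 * Real.sqrt 3 * X := by
    set M : ℝ := max (x 0) (max (x 1) (x 2)) with hM
    have hMnn : 0 ≤ M := le_trans (hxnn 0) (le_max_left _ _)
    have hxleM : ∀ j, x j ≤ M := by
      intro j
      fin_cases j
      · exact le_max_left _ _
      · exact le_trans (le_max_left _ _) (le_max_right _ _)
      · exact le_trans (le_max_right _ _) (le_max_right _ _)
    have hSle : S ≤ 3 * M ^ 2 := by
      rw [hSx, Fin.sum_univ_three]
      have h0 := pow_le_pow_left₀ (hxnn 0) (hxleM 0) 2
      have h1 := pow_le_pow_left₀ (hxnn 1) (hxleM 1) 2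
      have h2 := pow_le_pow_left₀ (hxnn 2) (hxleM 2) 2
      linarith
    have hNle : N ≤ Real.sqrt 3 * M := by
      calc N ≤ Real.sqrt (3 * M ^ 2) := Real.sqrt_le_sqrt hSle
        _ = Real.sqrt 3 * M := by
          rw [Real.sqrt_mul (by norm_num : (0:ℝ) ≤ 3), Real.sqrt_sq hMnn]
    have hM3leX : M ^ 3 ≤ X := by
      have h0 := pow_nonneg (hxnn 0) 3
      have h1 := pow_nonneg (hxnn 1) 3
      have h2 := pow_nonneg (hxnn 2) 3
      rw [hX, Fin.sum_univ_three]
      rcases max_cases (x 0) (max (x 1) (x 2)) with ⟨he, _⟩ | ⟨he, _⟩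
      · rw [hM, he]; linarith
      · rcases max_cases (x 1) (x 2) with ⟨he2, _⟩ | ⟨he2, _⟩
        · rw [hM, he, he2]; linarith
        · rw [hM, he, he2]; linarith
    have hs3 : (0:ℝ) ≤ Real.sqrt 3 := Real.sqrt_nonneg _
    have hs3sq : Real.sqrt 3 ^ 2 = 3 := Real.sq_sqrt (by norm_num)
    calc N ^ 3 ≤ (Real.sqrt 3 * M) ^ 3 := pow_le_pow_left₀ hNnn hNle 3
      _ = Real.sqrt 3 ^ 2 * Real.sqrt 3 * M ^ 3 := by ring
      _ = 3 * Real.sqrt 3 * M ^ 3 := by rw [hs3sq]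
      _ ≤ 3 * Real.sqrt 3 * X := by
          apply mul_le_mul_of_nonneg_left hM3leX
          positivity
  -- combine
  have hsumle : ∑ j, c j * x j ^ 3 ≤ cmax * X := by
    rw [hX, Finset.mul_sum]
    apply Finset.sum_le_sum
    intro j _
    exact mul_le_mul_of_nonneg_right (hcmax_ge j) (pow_nonneg (hxnn j) 3)
  have hsumge : cmin * X ≤ ∑ j, c j * x j ^ 3 := by
    rw [hX, Finset.mul_sum]
    apply Finset.sum_le_sum
    intro j _
    exact mul_le_mul_of_nonneg_right (hcmin_le j) (pow_nonneg (hxnn j) 3)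
  rw [keyx, hnu]
  constructor
  · have : ∑ j, c j * x j ^ 3 ≤ cmax * N ^ 3 :=
      le_trans hsumle (mul_le_mul_of_nonneg_left hXleN3 hcmaxpos.le)
    linarith
  · have h1 : cmin / (3 * Real.sqrt 3) * N ^ 3 ≤ cmin / (3 * Real.sqrt 3) * (3 * Real.sqrt 3 * X) := by
      apply mul_le_mul_of_nonneg_left hN3leX
      positivity
    have h2 : cmin / (3 * Real.sqrt 3) * (3 * Real.sqrt 3 * X) = cmin * X := by
      have : (3 : ℝ) * Real.sqrt 3 ≠ 0 := by positivity
      field_simp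
    linarith
end

section
/- Assume Im λ_j ≤ 0 for j = 1,2,3 and κ_1 μ_1 + κ_2 μ_2 = κ_3 conj(μ_3) with κ_1, κ_2, κ_3 > 0. Let α, r : [1,T] → ℂ³ be continuous with α continuously differentiable, satisfying i α'(t) = (1/t) F(α(t)) + r(t). Then d/dt ( ν_A(α(t))² ) ≤ 2 ν_A(r(t)) ν_A(α(t)) for all t ∈ [1,T]. -/
open MeasureTheory Filter Complex

/-- the differential inequality `d/dt(ν_A(α)²) ≤ 2 ν_A(r) ν_A(α)`
for solutions of the perturbed reduced ODE system. -/
theorem ode_dissipation_inequality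
    (l μ : Fin 3 → ℂ) (κ : Fin 3 → ℝ)
    (hl : ∀ j, l j ≠ 0) (hmu : ∀ j, μ j ≠ 0)
    (hdiss : ∀ j, (l j).im ≤ 0)
    (hκ : ∀ j, 0 < κ j)
    (hcoef : (κ 0 : ℂ) * μ 0 + (κ 1 : ℂ) * μ 1 = (κ 2 : ℂ) * (starRingEnd ℂ) (μ 2))
    (T : ℝ) (α α' r : ℝ → Fin 3 → ℂ)
    (hr : ContinuousOn r (Set.Icc 1 T))
    (hα : ∀ t ∈ Set.Icc (1 : ℝ) T, HasDerivWithinAt α (α' t) (Set.Icc 1 T) t)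
    (hα' : ContinuousOn α' (Set.Icc 1 T))
    (heq : ∀ t ∈ Set.Icc (1 : ℝ) T,
      Complex.I • α' t = (1 / (t : ℂ)) • Fnl l μ (α t) + r t) :
    ∀ t ∈ Set.Icc (1 : ℝ) T,
      derivWithin (fun τ => nuA κ (α τ) ^ 2) (Set.Icc 1 T) t
        ≤ 2 * nuA κ (r t) * nuA κ (α t) := by
  
  intro t ht
  have hν : ∀ z : Fin 3 → ℂ, 0 ≤ nuA κ z := fun z => Real.sqrt_nonneg _
  rcases le_or_gt T 1 with hT | hT
  · -- degenerate case: Icc 1 T ⊆ {1}, t is isolated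
    have ht1 : t = 1 := le_antisymm (ht.2.trans hT) ht.1
    have hset : Set.Icc (1:ℝ) T = {1} := by
      apply Set.eq_singleton_iff_unique_mem.mpr
      exact ⟨ht1 ▸ ht, fun x hx => le_antisymm (hx.2.trans hT) hx.1⟩
    have h0 : derivWithin (fun τ => nuA κ (α τ) ^ 2) (Set.Icc 1 T) t = 0 := by
      apply derivWithin_zero_of_not_accPt
      rw [accPt_principal_iff_nhdsWithin, not_neBot]
      rw [hset, ht1]
      simp
    rw [h0]
    exact mul_nonneg (mul_nonneg (by norm_num) (hν _)) (hν _)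
  -- main case
  have hud : UniqueDiffWithinAt ℝ (Set.Icc (1:ℝ) T) t := uniqueDiffOn_Icc hT t ht
  have ht0 : (0:ℝ) < t := lt_of_lt_of_le one_pos ht.1
  set a := α t with ha
  set a' := α' t with ha'
  set rr := r t with hrr
  -- componentwise derivative
  have hz : ∀ j, HasDerivWithinAt (fun τ => α τ j) (a' j) (Set.Icc 1 T) t := fun j =>
    (ContinuousLinearMap.proj j : (Fin 3 → ℂ) →L[ℝ] ℂ).hasFDerivAt.comp_hasDerivWithinAt t (hα t ht)
  have hD : HasDerivWithinAt
      (fun τ => ∑ j, κ j * ((α τ j) * (starRingEnd ℂ) (α τ j)).re)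
      (∑ j, κ j * ((a' j * (starRingEnd ℂ) (a j) + a j * (starRingEnd ℂ) (a' j)).re))
      (Set.Icc 1 T) t := by
    apply HasDerivWithinAt.fun_sum
    intro j _
    have h1 : HasDerivWithinAt (fun τ => (α τ j) * (starRingEnd ℂ) (α τ j))
        (a' j * (starRingEnd ℂ) (a j) + a j * (starRingEnd ℂ) (a' j)) (Set.Icc 1 T) t := by
      simpa only [starRingEnd_apply] using (hz j).fun_mul ((hz j).star)
    exact (Complex.reCLM.hasFDerivAt.comp_hasDerivWithinAt t h1).const_mul (κ j)
  have hfun : (fun τ => nuA κ (α τ) ^ 2)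
      = fun τ => ∑ j, κ j * ((α τ j) * (starRingEnd ℂ) (α τ j)).re := by
    funext τ
    rw [nuA, Real.sq_sqrt (Finset.sum_nonneg fun j _ => mul_nonneg (hκ j).le (by positivity))]
    refine Finset.sum_congr rfl fun j _ => ?_
    rw [Complex.mul_conj, Complex.normSq_eq_norm_sq, Complex.ofReal_re]
  have hderiv : derivWithin (fun τ => nuA κ (α τ) ^ 2) (Set.Icc 1 T) t
      = ∑ j, κ j * ((a' j * (starRingEnd ℂ) (a j) + a j * (starRingEnd ℂ) (a' j)).re) := by
    rw [hfun]; exact hD.derivWithin hud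
  -- express a' via the equation
  have hb : ∀ j, a' j = -Complex.I * ((1/(t:ℂ)) * Fnl l μ a j + rr j) := by
    intro j
    have h := congrFun (heq t ht) j
    simp only [Pi.smul_apply, Pi.add_apply, smul_eq_mul] at h
    linear_combination (-Complex.I) * h + a' j * Complex.I_sq
  have hre : ∀ (b c : ℂ), ((-Complex.I * b) * (starRingEnd ℂ) c
      + c * (starRingEnd ℂ) (-Complex.I * b)).re = 2 * (b * (starRingEnd ℂ) c).im := by
    intro b c
    simp only [Complex.add_re, Complex.mul_re, Complex.mul_im, Complex.neg_re,
      Complex.neg_im, Complex.I_re, Complex.I_im, Complex.conj_re, Complex.conj_im]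
    ring
  have hterm : ∀ j, (a' j * (starRingEnd ℂ) (a j) + a j * (starRingEnd ℂ) (a' j)).re
      = 2 * ((1/t) * (Fnl l μ a j * (starRingEnd ℂ) (a j)).im
          + (rr j * (starRingEnd ℂ) (a j)).im) := by
    intro j
    rw [hb j, hre ((1/(t:ℂ)) * Fnl l μ a j + rr j) (a j)]
    congr 1
    rw [add_mul, Complex.add_im, mul_assoc]
    congr 1
    rw [show (1/(t:ℂ)) = ((1/t : ℝ):ℂ) by push_cast; ring, Complex.im_ofReal_mul]
  -- Claim A: dissipative part nonpositive
  set W : ℂ := (κ 2:ℂ) * μ 2 * a 0 * a 1 * (starRingEnd ℂ) (a 2) with hWdef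
  have hW : ∑ j, (κ j:ℂ) * (Fnl l μ a j * (starRingEnd ℂ) (a j))
      = (∑ j, ((κ j * ‖a j‖ ^ 3 : ℝ):ℂ) * l j) + (W + (starRingEnd ℂ) W) := by
    have habs : ∀ z : ℂ, z * (starRingEnd ℂ) z = ((‖z‖ : ℝ) : ℂ) ^ 2 := by
      intro z; rw [Complex.mul_conj, Complex.normSq_eq_norm_sq]; push_cast; ring
    simp only [Fnl, Fin.sum_univ_three, Matrix.cons_val_zero, Matrix.cons_val_one,
      Matrix.head_cons, Matrix.cons_val_two, Matrix.tail_cons, hWdef, map_mul,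
      Complex.conj_ofReal, Complex.conj_conj]
    push_cast
    linear_combination ((starRingEnd ℂ) (a 0) * (starRingEnd ℂ) (a 1) * a 2) * hcoef
      + ((κ 0 : ℂ) * l 0 * (‖a 0‖ : ℂ)) * habs (a 0)
      + ((κ 1 : ℂ) * l 1 * (‖a 1‖ : ℂ)) * habs (a 1)
      + ((κ 2 : ℂ) * l 2 * (‖a 2‖ : ℂ)) * habs (a 2)
  have hSA : ∑ j, κ j * (Fnl l μ a j * (starRingEnd ℂ) (a j)).im ≤ 0 := by
    have him := congrArg Complex.im hW
    simp only [Fin.sum_univ_three, Complex.add_im, Complex.im_ofReal_mul,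
      Complex.conj_im] at him
    have hrw : ∑ j, κ j * (Fnl l μ a j * (starRingEnd ℂ) (a j)).im
        = ∑ j, (κ j * ‖a j‖ ^ 3) * (l j).im := by
      simp only [Fin.sum_univ_three]
      linarith [him]
    rw [hrw]
    apply Finset.sum_nonpos
    intro j _
    have h1 : (0:ℝ) ≤ κ j * ‖a j‖ ^ 3 := mul_nonneg (hκ j).le (by positivity)
    nlinarith [hdiss j]
  -- Claim B: Cauchy-Schwarz for the remainder term
  have hSB : ∑ j, κ j * (rr j * (starRingEnd ℂ) (a j)).im ≤ nuA κ rr * nuA κ a := by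
    have h1 : ∀ j, κ j * (rr j * (starRingEnd ℂ) (a j)).im
        ≤ (Real.sqrt (κ j) * ‖rr j‖) * (Real.sqrt (κ j) * ‖a j‖) := by
      intro j
      have him : (rr j * (starRingEnd ℂ) (a j)).im ≤ ‖rr j‖ * ‖a j‖ := by
        calc (rr j * (starRingEnd ℂ) (a j)).im ≤ ‖rr j * (starRingEnd ℂ) (a j)‖ :=
              Complex.im_le_norm _
          _ = ‖rr j‖ * ‖a j‖ := by rw [norm_mul, Complex.norm_conj]
      calc κ j * (rr j * (starRingEnd ℂ) (a j)).im
          ≤ κ j * (‖rr j‖ * ‖a j‖) :=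
            mul_le_mul_of_nonneg_left him (hκ j).le
        _ = (Real.sqrt (κ j) * ‖rr j‖) * (Real.sqrt (κ j) * ‖a j‖) := by
            rw [show (Real.sqrt (κ j) * ‖rr j‖) * (Real.sqrt (κ j) * ‖a j‖)
                = (Real.sqrt (κ j) * Real.sqrt (κ j)) * (‖rr j‖ * ‖a j‖)
                by ring, Real.mul_self_sqrt (hκ j).le]
    calc ∑ j, κ j * (rr j * (starRingEnd ℂ) (a j)).im
        ≤ ∑ j, (Real.sqrt (κ j) * ‖rr j‖) * (Real.sqrt (κ j) * ‖a j‖) :=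
          Finset.sum_le_sum fun j _ => h1 j
      _ ≤ nuA κ rr * nuA κ a := by
          have hcs := Finset.sum_mul_sq_le_sq_mul_sq Finset.univ
            (fun j => Real.sqrt (κ j) * ‖rr j‖)
            (fun j => Real.sqrt (κ j) * ‖a j‖)
          have hsq : ∀ (z : Fin 3 → ℂ) (j : Fin 3),
              (Real.sqrt (κ j) * ‖z j‖) ^ 2 = κ j * ‖z j‖ ^ 2 := by
            intro z j
            rw [mul_pow, Real.sq_sqrt (hκ j).le]
          unfold nuA
          rw [← Real.sqrt_mul (Finset.sum_nonneg fun j _ =>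
            mul_nonneg (hκ j).le (by positivity))]
          have hSnn : (0:ℝ) ≤ ∑ j, (Real.sqrt (κ j) * ‖rr j‖)
              * (Real.sqrt (κ j) * ‖a j‖) :=
            Finset.sum_nonneg fun j _ => mul_nonneg (by positivity) (by positivity)
          rw [show (∑ j, κ j * ‖rr j‖ ^ 2) * (∑ j, κ j * ‖a j‖ ^ 2)
              = (∑ j, (Real.sqrt (κ j) * ‖rr j‖) ^ 2)
                * (∑ j, (Real.sqrt (κ j) * ‖a j‖) ^ 2) by
            rw [Finset.sum_congr rfl fun j _ => hsq rr j,
              Finset.sum_congr rfl fun j _ => hsq a j]]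
          exact Real.le_sqrt_of_sq_le hcs
  -- assemble
  rw [hderiv]
  have h1t : (0:ℝ) ≤ 1/t := by positivity
  have hSA' : (1/t) * (∑ j, κ j * (Fnl l μ a j * (starRingEnd ℂ) (a j)).im) ≤ 0 :=
    mul_nonpos_iff.mpr (Or.inl ⟨h1t, hSA⟩)
  calc ∑ j, κ j * ((a' j * (starRingEnd ℂ) (a j) + a j * (starRingEnd ℂ) (a' j)).re)
      = 2 * ((1/t) * (∑ j, κ j * (Fnl l μ a j * (starRingEnd ℂ) (a j)).im)
           + ∑ j, κ j * (rr j * (starRingEnd ℂ) (a j)).im) := by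
        simp only [hterm, Fin.sum_univ_three]; ring
    _ ≤ 2 * (0 + nuA κ rr * nuA κ a) := by
        have := hSB
        linarith
    _ = 2 * nuA κ rr * nuA κ a := by ring
end
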